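/- arXiv:0804.1109 — 5 statements merged into one kernel-verified Lean document; each statement's English description precedes it below -/
import Mathlib

section
/- Let F_q be a finite field with q elements, let ψ : F_q → ℂ be a nontrivial additive character, let a, b be nonzero elements of F_q, and let f and g be nonzero elements of F_q of multiplicative orders s and t, respectively. Let r be a positive integer, and for each c ∈ F_q let N_c denote the number of pairs of integers (x, y) with 0 ≤ x ≤ s−1, 0 ≤ y ≤ r−1 and a·f^x + b·g^y = c. Then Σ_{c ∈ F_q} ( N_c − r·s/q )^2 = (1/q) · Σ_{λ ∈ F_q, λ ≠ 0} | Σ_{x=0}^{s−1} ψ(a·λ·f^x) |^2 · | Σ_{y=0}^{r−1} ψ(b·λ·g^y) |^2. -/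
open Finset Complex


/-- Variance identity: for a finite field `F_q`, a nontrivial additive character
`ψ : F_q → ℂ`, nonzero `a, b` and nonzero `f, g` of multiplicative orders `s, t`,
and a positive integer `r`, with `N_c` the number of pairs `(x, y)`,
`0 ≤ x ≤ s-1`, `0 ≤ y ≤ r-1`, with `a·f^x + b·g^y = c`:
`Σ_c (N_c − r·s/q)² = (1/q)·Σ_{λ≠0} |Σ_x ψ(aλf^x)|²·|Σ_y ψ(bλg^y)|²`. -/
theorem stmt_2 (F : Type) [Field F] [Fintype F] [DecidableEq F]
    (ψ : AddChar F ℂ) (hψ : ψ ≠ 1)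
    (a b f g : F) (s t r : ℕ)
    (ha : a ≠ 0) (hb : b ≠ 0) (hf : f ≠ 0) (hg : g ≠ 0)
    (hs : orderOf f = s) (ht : orderOf g = t) (hr : 0 < r) :
    ∑ c : F,
        ((((Finset.range s ×ˢ Finset.range r).filter
              (fun p => a * f ^ p.1 + b * g ^ p.2 = c)).card : ℝ) -
          (r : ℝ) * s / (Fintype.card F : ℝ)) ^ 2 =
      (1 / (Fintype.card F : ℝ)) *
        ∑ l ∈ Finset.univ.erase (0 : F),
          ‖∑ x ∈ Finset.range s, ψ (a * l * f ^ x)‖ ^ 2 *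
            ‖∑ y ∈ Finset.range r, ψ (b * l * g ^ y)‖ ^ 2 := by
  classical
  have hqR : (Fintype.card F : ℝ) ≠ 0 := Nat.cast_ne_zero.2 Fintype.card_ne_zero
  have hq0 : (Fintype.card F : ℂ) ≠ 0 := Nat.cast_ne_zero.2 Fintype.card_ne_zero
  have hprim : ψ.IsPrimitive := AddChar.IsPrimitive.of_ne_one hψ
  have hchar : 0 < ringChar F := Nat.pos_of_ne_zero (CharP.ringChar_ne_zero_of_finite F)
  have hconj : ∀ z : F, (starRingEnd ℂ) (ψ z) = ψ (-z) := by
    intro z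
    rw [AddChar.starComp_apply hchar, AddChar.inv_apply]
  have horth : ∀ u : F, ∑ c : F, ψ (c * u) = if u = 0 then (Fintype.card F : ℂ) else 0 :=
    fun u => by rw [AddChar.sum_mulShift u hprim]; push_cast; rfl
  set S : F → ℂ := fun l => ∑ x ∈ Finset.range s, ψ (a * l * f ^ x) with hSdef
  set T : F → ℂ := fun l => ∑ y ∈ Finset.range r, ψ (b * l * g ^ y) with hTdef
  set N : F → ℕ := fun c => ((Finset.range s ×ˢ Finset.range r).filter
      (fun p => a * f ^ p.1 + b * g ^ p.2 = c)).card with hNdef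
  set q : ℂ := (Fintype.card F : ℂ) with hqdef
  -- Step A
  have hN : ∀ c : F, (N c : ℂ) = (1 / q) * ∑ l : F, S l * T l * ψ (-(l * c)) := by
    intro c
    have h0 : (N c : ℂ) = ∑ p ∈ Finset.range s ×ˢ Finset.range r,
        if a * f ^ p.1 + b * g ^ p.2 = c then (1 : ℂ) else 0 := by
      rw [hNdef]
      simp only [Finset.card_filter]
      push_cast
      rfl
    have key : ∀ p : ℕ × ℕ, (if a * f ^ p.1 + b * g ^ p.2 = c then (1 : ℂ) else 0)
        = (1 / q) * ∑ l : F, ψ (a * l * f ^ p.1) * ψ (b * l * g ^ p.2) * ψ (-(l * c)) := by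
      intro p
      have h1 : ∀ l : F, ψ (a * l * f ^ p.1) * ψ (b * l * g ^ p.2) * ψ (-(l * c))
          = ψ (l * (a * f ^ p.1 + b * g ^ p.2 - c)) := by
        intro l
        rw [← AddChar.map_add_eq_mul, ← AddChar.map_add_eq_mul]
        congr 1
        ring
      simp_rw [h1]
      rw [horth]
      by_cases h : a * f ^ p.1 + b * g ^ p.2 = c
      · rw [if_pos h, if_pos (by rw [sub_eq_zero]; exact h)]
        field_simp
      · rw [if_neg h, if_neg (by rw [sub_eq_zero]; exact h), mul_zero]
    rw [h0]
    simp_rw [key, ← Finset.mul_sum]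
    congr 1
    rw [Finset.sum_comm]
    refine Finset.sum_congr rfl fun l _ => ?_
    rw [Finset.sum_product]
    simp only [hSdef, hTdef, Finset.sum_mul, Finset.mul_sum, mul_assoc]
    exact Finset.sum_comm
  -- Step B
  have hD : ∀ c : F, (N c : ℂ) - (r : ℂ) * s / q
      = (1 / q) * ∑ l ∈ Finset.univ.erase (0 : F), S l * T l * ψ (-(l * c)) := by
    intro c
    rw [hN c, ← Finset.add_sum_erase _ _ (Finset.mem_univ (0 : F))]
    have hS0 : S 0 = (s : ℂ) := by simp [hSdef]
    have hT0 : T 0 = (r : ℂ) := by simp [hTdef]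
    rw [hS0, hT0]
    simp only [zero_mul, neg_zero, AddChar.map_zero_eq_one, mul_one]
    field_simp
    simp only [mul_comm c]
    ring
  -- Step C
  have main : ∑ c : F, ((N c : ℂ) - (r : ℂ) * s / q) * (starRingEnd ℂ) ((N c : ℂ) - (r : ℂ) * s / q)
      = (1 / q) * ∑ l ∈ Finset.univ.erase (0 : F),
          (S l * (starRingEnd ℂ) (S l)) * (T l * (starRingEnd ℂ) (T l)) := by
    simp_rw [hD]
    have hconjsum : ∀ c : F, (starRingEnd ℂ) ((1 / q) * ∑ l ∈ Finset.univ.erase (0 : F),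
          S l * T l * ψ (-(l * c)))
        = (1 / q) * ∑ m ∈ Finset.univ.erase (0 : F),
            (starRingEnd ℂ) (S m) * (starRingEnd ℂ) (T m) * ψ (m * c) := by
      intro c
      rw [map_mul, map_sum]
      congr 1
      · rw [map_div₀, map_one, hqdef, Complex.conj_natCast]
      · refine Finset.sum_congr rfl fun m _ => ?_
        rw [map_mul, map_mul, hconj, neg_neg]
    have step1 : ∀ c : F, ((1 / q) * ∑ l ∈ Finset.univ.erase (0 : F), S l * T l * ψ (-(l * c))) *
        (starRingEnd ℂ) ((1 / q) * ∑ l ∈ Finset.univ.erase (0 : F), S l * T l * ψ (-(l * c)))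
        = (1 / q) * (1 / q) * ∑ l ∈ Finset.univ.erase (0 : F), ∑ m ∈ Finset.univ.erase (0 : F),
            (S l * T l * ((starRingEnd ℂ) (S m) * (starRingEnd ℂ) (T m))) * ψ (c * (m - l)) := by
      intro c
      rw [hconjsum c, mul_mul_mul_comm, Finset.sum_mul_sum]
      congr 1
      refine Finset.sum_congr rfl fun l _ => Finset.sum_congr rfl fun m _ => ?_
      rw [mul_mul_mul_comm]
      congr 1
      rw [← AddChar.map_add_eq_mul]
      congr 1
      ring
    simp_rw [step1]
    rw [← Finset.mul_sum, Finset.sum_comm]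
    have hsum_l : ∀ l ∈ Finset.univ.erase (0 : F),
        (∑ c : F, ∑ m ∈ Finset.univ.erase (0 : F),
          (S l * T l * ((starRingEnd ℂ) (S m) * (starRingEnd ℂ) (T m))) * ψ (c * (m - l)))
        = (S l * (starRingEnd ℂ) (S l)) * (T l * (starRingEnd ℂ) (T l)) * q := by
      intro l hl
      rw [Finset.sum_comm]
      have hm : ∀ m ∈ Finset.univ.erase (0 : F),
          (∑ c : F, (S l * T l * ((starRingEnd ℂ) (S m) * (starRingEnd ℂ) (T m))) * ψ (c * (m - l)))
          = if m = l then (S l * T l * ((starRingEnd ℂ) (S m) * (starRingEnd ℂ) (T m))) * q else 0 := by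
        intro m _
        rw [← Finset.mul_sum, horth (m - l)]
        simp_rw [sub_eq_zero]
        split_ifs <;> simp
      rw [Finset.sum_congr rfl hm, Finset.sum_ite_eq' (Finset.univ.erase (0 : F)) l
        (fun m => (S l * T l * ((starRingEnd ℂ) (S m) * (starRingEnd ℂ) (T m))) * q), if_pos hl]
      ring
    rw [Finset.sum_congr rfl hsum_l, ← Finset.sum_mul]
    rw [hqdef] at *
    field_simp
  -- Final assembly
  have hconjD : ∀ c : F, (starRingEnd ℂ) ((N c : ℂ) - (r : ℂ) * s / q) = (N c : ℂ) - (r : ℂ) * s / q := by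
    intro c
    rw [map_sub, map_div₀, map_mul]
    simp [hqdef]
  have hnorm : ∀ z : ℂ, z * (starRingEnd ℂ) z = ((‖z‖ : ℝ) : ℂ) ^ 2 := by
    intro z
    rw [Complex.mul_conj]
    norm_cast
    rw [Complex.normSq_eq_norm_sq]
  apply Complex.ofReal_injective
  push_cast
  calc (∑ c : F, ((N c : ℂ) - (r : ℂ) * s / q) ^ 2)
      = ∑ c : F, ((N c : ℂ) - (r : ℂ) * s / q) * (starRingEnd ℂ) ((N c : ℂ) - (r : ℂ) * s / q) := by
        refine Finset.sum_congr rfl fun c _ => ?_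
        rw [hconjD c, sq]
    _ = (1 / q) * ∑ l ∈ Finset.univ.erase (0 : F),
          (S l * (starRingEnd ℂ) (S l)) * (T l * (starRingEnd ℂ) (T l)) := main
    _ = (1 / q) * ∑ l ∈ Finset.univ.erase (0 : F),
          ((‖S l‖ : ℝ) : ℂ) ^ 2 * ((‖T l‖ : ℝ) : ℂ) ^ 2 := by
        simp_rw [hnorm]
end

section
/- Let F_q be a finite field with q elements, let ψ : F_q → ℂ be a nontrivial additive character, let α be a nonzero element of F_q, and let f be a nonzero element of F_q of multiplicative order s. Then | Σ_{x=0}^{s−1} ψ(α·f^x) | ≤ q^{1/2}. -/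
/-- For a finite field `F_q`, a nontrivial additive character `ψ : F_q → ℂ`,
a nonzero `α ∈ F_q`, and a nonzero `f ∈ F_q` of multiplicative order `s`:
`|Σ_{x=0}^{s-1} ψ(α·f^x)| ≤ q^{1/2}`. -/
theorem stmt_3 (F : Type) [Field F] [Fintype F]
    (ψ : AddChar F ℂ) (hψ : ψ ≠ 1)
    (α f : F) (s : ℕ)
    (hα : α ≠ 0) (hf : f ≠ 0) (hs : orderOf f = s) :
    ‖∑ x ∈ Finset.range s, ψ (α * f ^ x)‖ ≤ Real.sqrt (Fintype.card F) := by
  classical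
  have hprim : ψ.IsPrimitive := AddChar.IsPrimitive.of_ne_one hψ
  have hfin : IsOfFinOrder f := by
    refine isOfFinOrder_iff_pow_eq_one.mpr
      ⟨Fintype.card F - 1, ?_, FiniteField.pow_card_sub_one_eq_one f hf⟩
    have := Fintype.one_lt_card (α := F)
    omega
  have hs0 : 0 < s := hs ▸ hfin.orderOf_pos
  haveI : NeZero s := ⟨hs0.ne'⟩
  set T : F → ℂ := fun β => ∑ x ∈ Finset.range s, ψ (β * f ^ x) with hT
  -- pointwise power identity
  have hmod : ∀ n : ℕ, f ^ (n % s) = f ^ n := by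
    intro n
    rw [← hs]
    exact pow_mod_orderOf f n
  have hpow : ∀ i : Fin s, f ^ ((i + 1 : Fin s) : ℕ) = f ^ (i : ℕ) * f := by
    intro i
    have h1 : ((i + 1 : Fin s) : ℕ) = ((i : ℕ) + (1 % s)) % s := by
      rw [Fin.val_add, Fin.val_one']
    rw [h1, hmod, pow_add, hmod, pow_one]
  -- shift invariance
  have hshift : ∀ β : F, T (β * f) = T β := by
    intro β
    rw [hT]
    simp only
    rw [← Fin.sum_univ_eq_sum_range (fun x => ψ (β * f * f ^ x)) s,
        ← Fin.sum_univ_eq_sum_range (fun x => ψ (β * f ^ x)) s]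
    refine Fintype.sum_equiv (Equiv.addRight (1 : Fin s)) _ _ fun i => ?_
    simp only [Equiv.coe_addRight]
    rw [hpow i]
    ring_nf
  have hshiftk : ∀ (β : F) (k : ℕ), T (β * f ^ k) = T β := by
    intro β k
    induction k with
    | zero => simp
    | succ n ih =>
      rw [pow_succ, ← mul_assoc, hshift, ih]
  -- second moment
  have key : ∑ β : F, T β * (starRingEnd ℂ) (T β) = (Fintype.card F : ℂ) * s := by
    have expand : ∀ β : F, T β * (starRingEnd ℂ) (T β)
        = ∑ x ∈ Finset.range s, ∑ y ∈ Finset.range s, ψ (β * (f ^ x - f ^ y)) := by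
      intro β
      rw [hT]
      simp only
      rw [map_sum (starRingEnd ℂ), Finset.sum_mul_sum]
      refine Finset.sum_congr rfl fun x _ => Finset.sum_congr rfl fun y _ => ?_
      rw [← AddChar.map_neg_eq_conj, ← AddChar.map_add_eq_mul]
      ring_nf
    simp_rw [expand]
    have inner : ∀ x ∈ Finset.range s,
        (∑ y ∈ Finset.range s, ∑ β : F, ψ (β * (f ^ x - f ^ y)))
          = (Fintype.card F : ℂ) := by
      intro x hx
      have hval : ∀ y ∈ Finset.range s,
          (∑ β : F, ψ (β * (f ^ x - f ^ y)))
            = if f ^ x - f ^ y = 0 then (Fintype.card F : ℂ) else 0 := by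
        intro y _
        rw [AddChar.sum_mulShift _ hprim]
        split_ifs <;> simp
      rw [Finset.sum_congr rfl hval]
      rw [Finset.sum_eq_single x]
      · simp
      · intro y hy hyx
        rw [if_neg]
        rw [sub_eq_zero]
        intro h
        exact hyx (pow_injOn_Iio_orderOf
          (by simpa [hs] using Finset.mem_range.mp hy)
          (by simpa [hs] using Finset.mem_range.mp hx) h.symm)
      · intro h; exact absurd hx h
    calc ∑ β : F, ∑ x ∈ Finset.range s, ∑ y ∈ Finset.range s, ψ (β * (f ^ x - f ^ y))
        = ∑ x ∈ Finset.range s, ∑ β : F, ∑ y ∈ Finset.range s, ψ (β * (f ^ x - f ^ y)) :=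
          Finset.sum_comm
      _ = ∑ x ∈ Finset.range s, ∑ y ∈ Finset.range s, ∑ β : F, ψ (β * (f ^ x - f ^ y)) :=
          Finset.sum_congr rfl fun x _ => Finset.sum_comm
      _ = ∑ _x ∈ Finset.range s, (Fintype.card F : ℂ) := Finset.sum_congr rfl inner
      _ = (Fintype.card F : ℂ) * s := by
          rw [Finset.sum_const, Finset.card_range, nsmul_eq_mul, mul_comm]
  have keyR : ∑ β : F, Complex.normSq (T β) = (Fintype.card F : ℝ) * s := by
    have h := key
    simp_rw [Complex.mul_conj] at h
    exact_mod_cast h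
  -- coset bound
  set C : Finset F := (Finset.range s).image (fun k => α * f ^ k) with hC
  have hinj : Set.InjOn (fun k => α * f ^ k) (Finset.range s) := by
    intro a ha b hb hab
    simp only at hab
    have : f ^ a = f ^ b := mul_left_cancel₀ hα hab
    exact pow_injOn_Iio_orderOf
      (by simpa [hs] using Finset.mem_range.mp ha)
      (by simpa [hs] using Finset.mem_range.mp hb) this
  have hcoset : (s : ℝ) * Complex.normSq (T α) ≤ ∑ β : F, Complex.normSq (T β) := by
    have h1 : ∑ β ∈ C, Complex.normSq (T β) = (s : ℝ) * Complex.normSq (T α) := by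
      rw [hC, Finset.sum_image hinj]
      have : ∀ k ∈ Finset.range s, Complex.normSq (T (α * f ^ k))
          = Complex.normSq (T α) := fun k _ => by rw [hshiftk]
      rw [Finset.sum_congr rfl this, Finset.sum_const, Finset.card_range, nsmul_eq_mul]
    rw [← h1]
    exact Finset.sum_le_sum_of_subset_of_nonneg (Finset.subset_univ _)
      (fun _ _ _ => Complex.normSq_nonneg _)
  have hbound : Complex.normSq (T α) ≤ (Fintype.card F : ℝ) := by
    rw [keyR] at hcoset
    have hs0' : (0 : ℝ) < s := by exact_mod_cast hs0
    nlinarith [hcoset]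
  have : ‖T α‖ = Real.sqrt (Complex.normSq (T α)) := by
    rw [Complex.norm_def]
  calc ‖T α‖ = Real.sqrt (Complex.normSq (T α)) := this
    _ ≤ Real.sqrt (Fintype.card F) := Real.sqrt_le_sqrt hbound
end

section
/- Let F_q be a finite field with q elements, let a, b be nonzero elements of F_q, and let f and g be nonzero elements of F_q of multiplicative orders s and t, respectively. Let r be a positive integer with r ≤ t, and for each c ∈ F_q let N_c denote the number of pairs of integers (x, y) with 0 ≤ x ≤ s−1, 0 ≤ y ≤ r−1 and a·f^x + b·g^y = c. Then Σ_{c ∈ F_q} ( N_c − r·s/q )^2 ≤ q·r. -/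
open Finset Complex

private lemma aux_orth {F : Type} [Field F] [Fintype F] [DecidableEq F] {ψ : AddChar F ℂ}
    (hψ : ψ.IsPrimitive) (z : F) :
    ∑ u : F, ψ (u * z) = if z = 0 then (Fintype.card F : ℂ) else 0 := by
  split_ifs with h <;> simpa [h] using AddChar.sum_mulShift z hψ

private lemma aux_parseval {F : Type} [Field F] [Fintype F] [DecidableEq F] {ψ : AddChar F ℂ}
    (hψ : ψ.IsPrimitive) (hconj : ∀ x : F, (starRingEnd ℂ) (ψ x) = ψ (-x))
    (n : ℕ) (e : ℕ → F) (he : ∀ i < n, ∀ j < n, e i = e j → i = j) :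
    ∑ u : F, (Complex.normSq (∑ i ∈ Finset.range n, ψ (u * e i)) : ℝ)
      = (Fintype.card F : ℝ) * n := by
  have key : ∀ u : F, ((Complex.normSq (∑ i ∈ Finset.range n, ψ (u * e i)) : ℝ) : ℂ)
      = ∑ i ∈ Finset.range n, ∑ j ∈ Finset.range n, ψ (u * (e i - e j)) := by
    intro u
    rw [← Complex.mul_conj, map_sum, Finset.sum_mul_sum]
    refine Finset.sum_congr rfl fun i _ => Finset.sum_congr rfl fun j _ => ?_
    rw [hconj, ← AddChar.map_add_eq_mul]
    ring_nf
  have hC : (∑ u : F, ((Complex.normSq (∑ i ∈ Finset.range n, ψ (u * e i)) : ℝ) : ℂ))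
      = ((Fintype.card F : ℝ) * n : ℝ) := by
    calc (∑ u : F, ((Complex.normSq (∑ i ∈ Finset.range n, ψ (u * e i)) : ℝ) : ℂ))
        = ∑ u : F, ∑ i ∈ Finset.range n, ∑ j ∈ Finset.range n, ψ (u * (e i - e j)) :=
          Finset.sum_congr rfl fun u _ => key u
      _ = ∑ i ∈ Finset.range n, ∑ j ∈ Finset.range n, ∑ u : F, ψ (u * (e i - e j)) := by
          rw [Finset.sum_comm]
          exact Finset.sum_congr rfl fun i _ => Finset.sum_comm
      _ = ∑ i ∈ Finset.range n, ∑ j ∈ Finset.range n,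
            (if e i - e j = 0 then (Fintype.card F : ℂ) else 0) :=
          Finset.sum_congr rfl fun i _ => Finset.sum_congr rfl fun j _ => aux_orth hψ _
      _ = ∑ i ∈ Finset.range n, ∑ j ∈ Finset.range n,
            (if i = j then (Fintype.card F : ℂ) else 0) := by
          refine Finset.sum_congr rfl fun i hi => Finset.sum_congr rfl fun j hj => ?_
          congr 1
          simp only [sub_eq_zero, eq_iff_iff]
          constructor
          · exact fun h => he i (Finset.mem_range.mp hi) j (Finset.mem_range.mp hj) h
          · rintro rfl; rfl
      _ = ∑ i ∈ Finset.range n, (Fintype.card F : ℂ) := by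
          refine Finset.sum_congr rfl fun i hi => ?_
          simp [Finset.sum_ite_eq, hi]
      _ = ((Fintype.card F : ℝ) * n : ℝ) := by
          push_cast
          rw [Finset.sum_const, Finset.card_range]
          ring
  exact_mod_cast (by rw [← hC]; push_cast; rfl :
    (((∑ u : F, (Complex.normSq (∑ i ∈ Finset.range n, ψ (u * e i)) : ℝ)) : ℝ) : ℂ)
      = (((Fintype.card F : ℝ) * n : ℝ) : ℂ))

set_option maxHeartbeats 1000000 in
/-- For a finite field `F_q`, nonzero `a, b ∈ F_q`, nonzero `f, g ∈ F_q` of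
multiplicative orders `s, t`, and a positive integer `r ≤ t`, with `N_c` the number
of pairs `(x, y)`, `0 ≤ x ≤ s-1`, `0 ≤ y ≤ r-1`, with `a·f^x + b·g^y = c`:
`Σ_{c ∈ F_q} (N_c − r·s/q)² ≤ q·r`. -/
theorem stmt_5 (F : Type) [Field F] [Fintype F] [DecidableEq F]
    (a b f g : F) (s t r : ℕ)
    (ha : a ≠ 0) (hb : b ≠ 0) (hf : f ≠ 0) (hg : g ≠ 0)
    (hs : orderOf f = s) (ht : orderOf g = t) (hr : 0 < r) (hrt : r ≤ t) :
    ∑ c : F,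
        ((((Finset.range s ×ˢ Finset.range r).filter
              (fun p => a * f ^ p.1 + b * g ^ p.2 = c)).card : ℝ) -
          (r : ℝ) * s / (Fintype.card F : ℝ)) ^ 2 ≤
      (Fintype.card F : ℝ) * r := by
  classical
  have hq0 : 0 < Fintype.card F := Fintype.card_pos
  have hqR : (0:ℝ) < (Fintype.card F : ℝ) := by exact_mod_cast hq0
  have hqC : ((Fintype.card F : ℂ)) ≠ 0 := by exact_mod_cast hq0.ne'
  have hchar : 0 < ringChar F := Nat.pos_of_ne_zero (CharP.ringChar_ne_zero_of_finite F)
  set ψ : AddChar F ℂ := AddChar.FiniteField.primitiveChar_to_Complex F with hψdef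
  have hψ : ψ.IsPrimitive := AddChar.FiniteField.primitiveChar_to_Complex_isPrimitive F
  have hconj : ∀ x : F, (starRingEnd ℂ) (ψ x) = ψ (-x) := fun x => by
    rw [AddChar.starComp_apply hchar, AddChar.inv_apply]
  have hO : ∀ z : F, ∑ u : F, ψ (u * z) = if z = 0 then (Fintype.card F : ℂ) else 0 :=
    fun z => aux_orth hψ z
  -- positivity of s
  have hs0 : 0 < s := by
    rw [← hs, show f = ((Units.mk0 f hf : Fˣ) : F) from rfl, orderOf_units]
    exact orderOf_pos _
  -- injectivity of powers
  have pow_inj : ∀ (h : F), h ≠ 0 → ∀ i j : ℕ, i < orderOf h → j < orderOf h →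
      h ^ i = h ^ j → i = j := by
    intro h h0 i j hi hj hij
    wlog hle : i ≤ j generalizing i j
    · exact (this j i hj hi hij.symm (le_of_not_ge hle)).symm
    have h1 : h ^ i * h ^ (j - i) = h ^ i * 1 := by
      rw [mul_one, ← pow_add, Nat.add_sub_cancel' hle]; exact hij.symm
    have h2 : h ^ (j - i) = 1 := mul_left_cancel₀ (pow_ne_zero i h0) h1
    have h4 : j - i = 0 :=
      Nat.eq_zero_of_dvd_of_lt (orderOf_dvd_of_pow_eq_one h2)
        (lt_of_le_of_lt (Nat.sub_le j i) hj)
    omega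
  have hfinj : ∀ i < s, ∀ j < s, a * f ^ i = a * f ^ j → i = j := fun i hi j hj hij =>
    pow_inj f hf i j (hs ▸ hi) (hs ▸ hj) (mul_left_cancel₀ ha hij)
  have hginj : ∀ i < r, ∀ j < r, b * g ^ i = b * g ^ j → i = j := fun i hi j hj hij =>
    pow_inj g hg i j (ht ▸ lt_of_lt_of_le hi hrt) (ht ▸ lt_of_lt_of_le hj hrt)
      (mul_left_cancel₀ hb hij)
  set A : F → ℂ := fun u => ∑ x ∈ Finset.range s, ψ (u * (a * f ^ x)) with hAdef
  set B : F → ℂ := fun u => ∑ y ∈ Finset.range r, ψ (u * (b * g ^ y)) with hBdef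
  set E : Finset F := Finset.univ.erase 0 with hEdef
  set N : F → ℕ := fun c => ((Finset.range s ×ˢ Finset.range r).filter
      (fun p => a * f ^ p.1 + b * g ^ p.2 = c)).card with hNdef
  -- Step 1: Fourier expansion of N
  have key1 : ∀ c : F, ∑ u : F, A u * B u * ψ (u * (-c))
      = (Fintype.card F : ℂ) * (N c : ℂ) := by
    intro c
    have e1 : ∀ u : F, A u * B u * ψ (u * (-c))
        = ∑ x ∈ Finset.range s, ∑ y ∈ Finset.range r,
            ψ (u * (a * f ^ x + b * g ^ y - c)) := by
      intro u
      rw [hAdef, hBdef]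
      rw [Finset.sum_mul_sum, Finset.sum_mul]
      refine Finset.sum_congr rfl fun x _ => ?_
      rw [Finset.sum_mul]
      refine Finset.sum_congr rfl fun y _ => ?_
      rw [← AddChar.map_add_eq_mul, ← AddChar.map_add_eq_mul]
      ring_nf
    calc ∑ u : F, A u * B u * ψ (u * (-c))
        = ∑ u : F, ∑ x ∈ Finset.range s, ∑ y ∈ Finset.range r,
            ψ (u * (a * f ^ x + b * g ^ y - c)) := Finset.sum_congr rfl fun u _ => e1 u
      _ = ∑ x ∈ Finset.range s, ∑ y ∈ Finset.range r, ∑ u : F,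
            ψ (u * (a * f ^ x + b * g ^ y - c)) := by
          rw [Finset.sum_comm]
          exact Finset.sum_congr rfl fun x _ => Finset.sum_comm
      _ = ∑ x ∈ Finset.range s, ∑ y ∈ Finset.range r,
            (if a * f ^ x + b * g ^ y = c then (Fintype.card F : ℂ) else 0) := by
          refine Finset.sum_congr rfl fun x _ => Finset.sum_congr rfl fun y _ => ?_
          rw [hO]
          congr 1
          simp [sub_eq_zero]
      _ = (Fintype.card F : ℂ) * (N c : ℂ) := by
          rw [hNdef]
          simp only [Finset.card_filter]
          push_cast
          rw [Finset.sum_product, Finset.mul_sum]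
          refine Finset.sum_congr rfl fun x _ => ?_
          rw [Finset.mul_sum]
          refine Finset.sum_congr rfl fun y _ => ?_
          split_ifs <;> simp
  -- values at 0
  have hA0 : A 0 = (s : ℂ) := by simp [hAdef]
  have hB0 : B 0 = (r : ℂ) := by simp [hBdef]
  -- Step 1': centered Fourier expansion
  have key2 : ∀ c : F, (N c : ℂ) - (r : ℂ) * s / (Fintype.card F : ℂ)
      = (Fintype.card F : ℂ)⁻¹ * ∑ u ∈ E, A u * B u * ψ (u * (-c)) := by
    intro c
    have hsplit : ∑ u : F, A u * B u * ψ (u * (-c))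
        = (s : ℂ) * r + ∑ u ∈ E, A u * B u * ψ (u * (-c)) := by
      rw [hEdef, ← Finset.add_sum_erase Finset.univ _ (Finset.mem_univ (0:F))]
      congr 1
      simp [hA0, hB0]
    have h := key1 c
    rw [hsplit] at h
    have h2 : ∑ u ∈ E, A u * B u * ψ (u * (-c))
        = (Fintype.card F : ℂ) * (N c : ℂ) - (s : ℂ) * r := by linear_combination h
    rw [h2]
    field_simp
  -- Step 2: Plancherel
  have step2 : ∑ c : F, ((Fintype.card F : ℂ)⁻¹ * ∑ u ∈ E, A u * B u * ψ (u * (-c))) *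
        (starRingEnd ℂ) ((Fintype.card F : ℂ)⁻¹ * ∑ u ∈ E, A u * B u * ψ (u * (-c)))
      = (Fintype.card F : ℂ)⁻¹ *
          ∑ u ∈ E, (A u * (starRingEnd ℂ) (A u)) * (B u * (starRingEnd ℂ) (B u)) := by
    have hO' : ∀ z : F, ∑ c : F, ψ (c * z) = if z = 0 then (Fintype.card F : ℂ) else 0 := hO
    have hconjsum : ∀ c : F,
        (starRingEnd ℂ) ((Fintype.card F : ℂ)⁻¹ * ∑ u ∈ E, A u * B u * ψ (u * (-c)))
          = (Fintype.card F : ℂ)⁻¹ *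
              ∑ v ∈ E, (starRingEnd ℂ) (A v) * (starRingEnd ℂ) (B v) * ψ (v * c) := by
      intro c
      rw [map_mul, map_inv₀, map_natCast, map_sum]
      congr 1
      refine Finset.sum_congr rfl fun v _ => ?_
      rw [map_mul, map_mul, hconj]
      congr 1
      congr 1
      ring
    calc ∑ c : F, ((Fintype.card F : ℂ)⁻¹ * ∑ u ∈ E, A u * B u * ψ (u * (-c))) *
          (starRingEnd ℂ) ((Fintype.card F : ℂ)⁻¹ * ∑ u ∈ E, A u * B u * ψ (u * (-c)))
        = ∑ c : F, (Fintype.card F : ℂ)⁻¹ * (Fintype.card F : ℂ)⁻¹ *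
            ∑ u ∈ E, ∑ v ∈ E,
              (A u * B u * (starRingEnd ℂ) (A v) * (starRingEnd ℂ) (B v)) * ψ (c * (v - u)) := by
          refine Finset.sum_congr rfl fun c _ => ?_
          rw [hconjsum c, mul_mul_mul_comm]
          congr 1
          rw [Finset.sum_mul_sum]
          refine Finset.sum_congr rfl fun u _ => Finset.sum_congr rfl fun v _ => ?_
          have h1 : ψ (u * (-c)) * ψ (v * c) = ψ (c * (v - u)) := by
            rw [← AddChar.map_add_eq_mul]
            congr 1
            ring
          linear_combination (A u * B u * (starRingEnd ℂ) (A v) * (starRingEnd ℂ) (B v)) * h1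
      _ = (Fintype.card F : ℂ)⁻¹ * (Fintype.card F : ℂ)⁻¹ *
            ∑ u ∈ E, ∑ v ∈ E,
              (A u * B u * (starRingEnd ℂ) (A v) * (starRingEnd ℂ) (B v)) *
                ∑ c : F, ψ (c * (v - u)) := by
          rw [← Finset.mul_sum]
          congr 1
          rw [Finset.sum_comm]
          refine Finset.sum_congr rfl fun u _ => ?_
          rw [Finset.sum_comm]
          refine Finset.sum_congr rfl fun v _ => ?_
          exact (Finset.mul_sum _ _ _).symm
      _ = (Fintype.card F : ℂ)⁻¹ * (Fintype.card F : ℂ)⁻¹ *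
            ∑ u ∈ E,
              (A u * B u * (starRingEnd ℂ) (A u) * (starRingEnd ℂ) (B u)) *
                (Fintype.card F : ℂ) := by
          congr 1
          refine Finset.sum_congr rfl fun u hu => ?_
          calc ∑ v ∈ E, (A u * B u * (starRingEnd ℂ) (A v) * (starRingEnd ℂ) (B v)) *
                ∑ c : F, ψ (c * (v - u))
              = ∑ v ∈ E, (A u * B u * (starRingEnd ℂ) (A v) * (starRingEnd ℂ) (B v)) *
                  (if v - u = 0 then (Fintype.card F : ℂ) else 0) := by
                refine Finset.sum_congr rfl fun v _ => ?_
                rw [hO' (v - u)]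
            _ = (A u * B u * (starRingEnd ℂ) (A u) * (starRingEnd ℂ) (B u)) *
                  (Fintype.card F : ℂ) := by
                rw [Finset.sum_eq_single u
                  (fun v _ hne => by rw [if_neg (sub_ne_zero.mpr hne), mul_zero])
                  (fun habs => absurd hu habs), sub_self, if_pos rfl]
      _ = (Fintype.card F : ℂ)⁻¹ *
            ∑ u ∈ E, (A u * (starRingEnd ℂ) (A u)) * (B u * (starRingEnd ℂ) (B u)) := by
          rw [← Finset.sum_mul]
          have hS : ∑ u ∈ E, (A u * B u * (starRingEnd ℂ) (A u) * (starRingEnd ℂ) (B u))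
              = ∑ u ∈ E, (A u * (starRingEnd ℂ) (A u)) * (B u * (starRingEnd ℂ) (B u)) :=
            Finset.sum_congr rfl fun u _ => by ring
          rw [hS]
          field_simp
  -- Parseval identities
  have hPA : ∑ v : F, Complex.normSq (A v) = (Fintype.card F : ℝ) * s :=
    aux_parseval hψ hconj s (fun x => a * f ^ x) hfinj
  have hPB : ∑ v : F, Complex.normSq (B v) = (Fintype.card F : ℝ) * r :=
    aux_parseval hψ hconj r (fun y => b * g ^ y) hginj
  -- Step 3: invariance of A under multiplication by f, and the pointwise bound
  have hfs1 : f ^ s = 1 := by rw [← hs]; exact pow_orderOf_eq_one f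
  have hAshift : ∀ u : F, A (u * f) = A u := by
    intro u
    have step : A (u * f) = ∑ x ∈ Finset.range s, ψ (u * (a * f ^ (x + 1))) := by
      rw [hAdef]
      refine Finset.sum_congr rfl fun x _ => ?_
      congr 1
      ring
    rw [step]
    have h0 : ψ (u * (a * f ^ s)) = ψ (u * (a * f ^ 0)) := by rw [hfs1, pow_zero]
    have hsucc' := Finset.sum_range_succ' (fun x => ψ (u * (a * f ^ x))) s
    have hsucc := Finset.sum_range_succ (fun x => ψ (u * (a * f ^ x))) s
    rw [hAdef]
    try simp only at hsucc' hsucc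
    linear_combination -hsucc' + hsucc + h0
  have hApow : ∀ (u : F) (k : ℕ), A (u * f ^ k) = A u := by
    intro u k
    induction k with
    | zero => simp
    | succ k ih =>
        have : u * f ^ (k + 1) = u * f ^ k * f := by ring
        rw [this, hAshift (u * f ^ k), ih]
  have hAbound : ∀ u : F, u ≠ 0 → Complex.normSq (A u) ≤ (Fintype.card F : ℝ) := by
    intro u hu
    have hinj2 : ∀ i ∈ Finset.range s, ∀ j ∈ Finset.range s,
        u * f ^ i = u * f ^ j → i = j := by
      intro i hi j hj hij
      exact pow_inj f hf i j (hs ▸ Finset.mem_range.mp hi) (hs ▸ Finset.mem_range.mp hj)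
        (mul_left_cancel₀ hu hij)
    have h1 : (s : ℝ) * Complex.normSq (A u)
        = ∑ j ∈ Finset.range s, Complex.normSq (A (u * f ^ j)) := by
      rw [Finset.sum_congr rfl fun j _ => by rw [hApow u j]]
      rw [Finset.sum_const, Finset.card_range, nsmul_eq_mul]
    have h2 : ∑ j ∈ Finset.range s, Complex.normSq (A (u * f ^ j))
        ≤ ∑ v : F, Complex.normSq (A v) :=
      calc ∑ j ∈ Finset.range s, Complex.normSq (A (u * f ^ j))
          = ∑ v ∈ (Finset.range s).image (fun j => u * f ^ j), Complex.normSq (A v) :=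
            (Finset.sum_image (f := fun v => Complex.normSq (A v)) hinj2).symm
        _ ≤ ∑ v : F, Complex.normSq (A v) :=
            Finset.sum_le_sum_of_subset_of_nonneg (Finset.subset_univ _)
              (fun v _ _ => Complex.normSq_nonneg _)
    have h3 : (s : ℝ) * Complex.normSq (A u) ≤ (Fintype.card F : ℝ) * s := by
      rw [h1, ← hPA]; exact h2
    have hs0' : (0:ℝ) < s := by exact_mod_cast hs0
    nlinarith [h3, hs0']
  -- Realify step 2
  have hcast : ∀ c : F, (starRingEnd ℂ) ((N c : ℂ) - (r : ℂ) * s / (Fintype.card F : ℂ))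
      = (N c : ℂ) - (r : ℂ) * s / (Fintype.card F : ℂ) := by
    intro c
    simp [map_sub, map_div₀, map_mul, Complex.conj_natCast]
  have hC : ∑ c : F, ((N c : ℂ) - (r : ℂ) * s / (Fintype.card F : ℂ)) ^ 2
      = (Fintype.card F : ℂ)⁻¹ *
          ∑ u ∈ E, ((Complex.normSq (A u) : ℂ)) * ((Complex.normSq (B u) : ℂ)) := by
    calc ∑ c : F, ((N c : ℂ) - (r : ℂ) * s / (Fintype.card F : ℂ)) ^ 2
        = ∑ c : F, ((Fintype.card F : ℂ)⁻¹ * ∑ u ∈ E, A u * B u * ψ (u * (-c))) *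
            (starRingEnd ℂ) ((Fintype.card F : ℂ)⁻¹ * ∑ u ∈ E, A u * B u * ψ (u * (-c))) := by
          refine Finset.sum_congr rfl fun c _ => ?_
          have h' : ((N c : ℂ) - (r : ℂ) * s / (Fintype.card F : ℂ)) ^ 2
              = ((N c : ℂ) - (r : ℂ) * s / (Fintype.card F : ℂ)) *
                  (starRingEnd ℂ) ((N c : ℂ) - (r : ℂ) * s / (Fintype.card F : ℂ)) := by
            rw [hcast c]; ring
          rw [h', key2 c]
      _ = (Fintype.card F : ℂ)⁻¹ *
            ∑ u ∈ E, (A u * (starRingEnd ℂ) (A u)) * (B u * (starRingEnd ℂ) (B u)) := step2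
      _ = _ := by
          congr 1
          exact Finset.sum_congr rfl fun u _ => by rw [Complex.mul_conj, Complex.mul_conj]
  have step2R : ∑ c : F, ((N c : ℝ) - (r : ℝ) * s / (Fintype.card F : ℝ)) ^ 2
      = (Fintype.card F : ℝ)⁻¹ * ∑ u ∈ E, Complex.normSq (A u) * Complex.normSq (B u) := by
    have h2 : ((∑ c : F, ((N c : ℝ) - (r : ℝ) * s / (Fintype.card F : ℝ)) ^ 2 : ℝ) : ℂ)
        = (((Fintype.card F : ℝ)⁻¹ *
            ∑ u ∈ E, Complex.normSq (A u) * Complex.normSq (B u) : ℝ) : ℂ) := by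
      push_cast
      exact_mod_cast hC
    exact_mod_cast h2
  -- Final chain of inequalities
  have goal_eq : ∑ c : F,
        ((((Finset.range s ×ˢ Finset.range r).filter
              (fun p => a * f ^ p.1 + b * g ^ p.2 = c)).card : ℝ) -
          (r : ℝ) * s / (Fintype.card F : ℝ)) ^ 2
      = ∑ c : F, ((N c : ℝ) - (r : ℝ) * s / (Fintype.card F : ℝ)) ^ 2 := rfl
  rw [goal_eq, step2R]
  have hEbound : ∑ u ∈ E, Complex.normSq (A u) * Complex.normSq (B u)
      ≤ (Fintype.card F : ℝ) * ∑ u ∈ E, Complex.normSq (B u) := by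
    rw [Finset.mul_sum]
    refine Finset.sum_le_sum fun u hu => ?_
    have hu0 : u ≠ 0 := Finset.ne_of_mem_erase (hEdef ▸ hu)
    exact mul_le_mul_of_nonneg_right (hAbound u hu0) (Complex.normSq_nonneg _)
  have hBbound : ∑ u ∈ E, Complex.normSq (B u) ≤ (Fintype.card F : ℝ) * r := by
    rw [← hPB]
    exact Finset.sum_le_sum_of_subset_of_nonneg (Finset.subset_univ _)
      (fun v _ _ => Complex.normSq_nonneg _)
  calc (Fintype.card F : ℝ)⁻¹ * ∑ u ∈ E, Complex.normSq (A u) * Complex.normSq (B u)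
      ≤ (Fintype.card F : ℝ)⁻¹ * ((Fintype.card F : ℝ) * ∑ u ∈ E, Complex.normSq (B u)) :=
        mul_le_mul_of_nonneg_left hEbound (inv_nonneg.mpr hqR.le)
    _ = ∑ u ∈ E, Complex.normSq (B u) := by field_simp
    _ ≤ (Fintype.card F : ℝ) * r := hBbound
end

section
/- Let F_q be a finite field with q elements, let a, b be nonzero elements of F_q, and let f and g be nonzero elements of F_q of multiplicative orders s and t, respectively. Let r be a positive integer with r ≤ t, and for each c ∈ F_q let N_c denote the number of pairs of integers (x, y) with 0 ≤ x ≤ s−1, 0 ≤ y ≤ r−1 and a·f^x + b·g^y = c. Then for every real δ > 0, the number of elements c ∈ F_q with | N_c − r·s/q | ≥ δ·√r is at most q/δ^2. -/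
open Finset Complex

set_option linter.unusedSectionVars false

variable {F : Type} [Field F] [Fintype F] [DecidableEq F]

private noncomputable def psi (F : Type) [Field F] [Fintype F] : AddChar F ℂ :=
  AddChar.FiniteField.primitiveChar_to_Complex F

private lemma psi_sum (x : F) :
    ∑ u : F, psi F (u * x) = if x = 0 then (Fintype.card F : ℂ) else 0 := by
  have := AddChar.sum_mulShift x (AddChar.FiniteField.primitiveChar_to_Complex_isPrimitive F)
  rw [psi, this]; split <;> simp

private lemma psi_conj (z : F) : (starRingEnd ℂ) (psi F z) = psi F (-z) := by
  have h : 0 < ringChar F := Nat.pos_of_ne_zero (CharP.ringChar_ne_zero_of_finite F)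
  rw [psi, AddChar.starComp_apply h, AddChar.inv_apply]

private lemma parseval (D : Finset F) (A : F → ℂ) :
    ∑ c : F, ((∑ u ∈ D, A u * psi F (u * c)) *
        (starRingEnd ℂ) (∑ v ∈ D, A v * psi F (v * c)))
      = (Fintype.card F : ℂ) * ∑ u ∈ D, A u * (starRingEnd ℂ) (A u) := by
  have step : ∀ u v : F, ∑ c : F, psi F (u * c) * (starRingEnd ℂ) (psi F (v * c))
      = if u = v then (Fintype.card F : ℂ) else 0 := by
    intro u v
    have h1 : ∀ c : F, psi F (u * c) * (starRingEnd ℂ) (psi F (v * c))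
        = psi F (c * (u - v)) := by
      intro c
      rw [psi_conj, ← AddChar.map_add_eq_mul]
      congr 1; ring
    rw [Finset.sum_congr rfl fun c _ => h1 c, psi_sum]
    by_cases h : u = v
    · simp [h]
    · simp [h, sub_ne_zero.mpr h]
  calc ∑ c : F, ((∑ u ∈ D, A u * psi F (u * c)) *
        (starRingEnd ℂ) (∑ v ∈ D, A v * psi F (v * c)))
      = ∑ c : F, ∑ u ∈ D, ∑ v ∈ D,
          (A u * (starRingEnd ℂ) (A v)) * (psi F (u * c) * (starRingEnd ℂ) (psi F (v * c))) := by
        refine Finset.sum_congr rfl fun c _ => ?_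
        rw [map_sum (starRingEnd ℂ), Finset.sum_mul_sum]
        refine Finset.sum_congr rfl fun u _ => Finset.sum_congr rfl fun v _ => ?_
        rw [(starRingEnd ℂ).map_mul, mul_mul_mul_comm]
    _ = ∑ u ∈ D, ∑ v ∈ D, (A u * (starRingEnd ℂ) (A v)) *
          ∑ c : F, (psi F (u * c) * (starRingEnd ℂ) (psi F (v * c))) := by
        rw [Finset.sum_comm]
        refine Finset.sum_congr rfl fun u _ => ?_
        rw [Finset.sum_comm]
        refine Finset.sum_congr rfl fun v _ => ?_
        rw [Finset.mul_sum]
    _ = ∑ u ∈ D, (A u * (starRingEnd ℂ) (A u)) * (Fintype.card F : ℂ) := by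
        refine Finset.sum_congr rfl fun u hu => ?_
        rw [Finset.sum_congr rfl fun v _ => by rw [step u v]]
        simp only [mul_ite, mul_zero]
        rw [Finset.sum_ite_eq D u (fun v => A u * (starRingEnd ℂ) (A v) * (Fintype.card F : ℂ))]
        simp [hu]
    _ = (Fintype.card F : ℂ) * ∑ u ∈ D, A u * (starRingEnd ℂ) (A u) := by
        rw [Finset.mul_sum]; exact Finset.sum_congr rfl fun u _ => by ring
open Finset

private lemma pow_inj_lt {F : Type} [Field F] (h : F) (hh : h ≠ 0) {i j : ℕ}
    (hi : i < orderOf h) (hj : j < orderOf h) (he : h ^ i = h ^ j) : i = j := by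
  wlog hij : i ≤ j generalizing i j
  · exact (this hj hi he.symm (le_of_not_ge hij)).symm
  have hp : h ^ i ≠ 0 := pow_ne_zero _ hh
  have h1 : h ^ (j - i) = 1 := by
    have : h ^ i * h ^ (j - i) = h ^ i * 1 := by
      rw [mul_one, ← pow_add, Nat.add_sub_cancel' hij, he]
    exact mul_left_cancel₀ hp this
  have hd : orderOf h ∣ j - i := orderOf_dvd_of_pow_eq_one h1
  rcases Nat.eq_zero_or_pos (j - i) with h0 | h0
  · omega
  · have := Nat.le_of_dvd h0 hd; omega

private lemma mod_left_inv {s : ℕ} (hs0 : 0 < s) {x : ℕ} (hx : x < s) :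
    ((x + 1) % s + (s - 1)) % s = x := by
  rcases Nat.lt_or_ge (x + 1) s with h | h
  · rw [Nat.mod_eq_of_lt h, show x + 1 + (s - 1) = x + s by omega,
      Nat.add_mod_right, Nat.mod_eq_of_lt hx]
  · rw [show x + 1 = s by omega, Nat.mod_self, Nat.zero_add,
      Nat.mod_eq_of_lt (show s - 1 < s by omega)]
    omega

private lemma mod_right_inv {s : ℕ} (hs0 : 0 < s) {y : ℕ} (hy : y < s) :
    ((y + (s - 1)) % s + 1) % s = y := by
  rcases Nat.eq_zero_or_pos y with h | h
  · subst h
    have h1 : (0 + (s - 1)) % s = s - 1 := by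
      rw [Nat.zero_add]; exact Nat.mod_eq_of_lt (by omega)
    rw [h1, show s - 1 + 1 = s by omega, Nat.mod_self]
  · have h1 : (y + (s - 1)) % s = y - 1 := by
      rw [show y + (s - 1) = (y - 1) + s by omega, Nat.add_mod_right]
      exact Nat.mod_eq_of_lt (by omega)
    rw [h1, show y - 1 + 1 = y by omega, Nat.mod_eq_of_lt hy]

private lemma sum_normSq (F : Type) [Field F] [Fintype F] [DecidableEq F]
    (e h : F) (he : e ≠ 0) (hh : h ≠ 0) (n : ℕ) (hn : n ≤ orderOf h) :
    ∑ u : F, Complex.normSq (∑ x ∈ Finset.range n, psi F (u * (e * h ^ x)))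
      = (Fintype.card F : ℝ) * n := by
  have hinj : ∀ x ∈ Finset.range n, ∀ y ∈ Finset.range n, e * h ^ x = e * h ^ y → x = y := by
    intro x hx y hy hxy
    exact pow_inj_lt h hh (lt_of_lt_of_le (Finset.mem_range.mp hx) hn)
      (lt_of_lt_of_le (Finset.mem_range.mp hy) hn) (mul_left_cancel₀ he hxy)
  set V : Finset F := (Finset.range n).image (fun x => e * h ^ x) with hV
  have hcard : V.card = n := by
    rw [hV, Finset.card_image_of_injOn, Finset.card_range]
    intro x hx y hy hxy
    exact hinj x (by simpa using hx) y (by simpa using hy) hxy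
  have hrw : ∀ u : F, (∑ x ∈ Finset.range n, psi F (u * (e * h ^ x)))
      = ∑ v ∈ V, (1 : ℂ) * psi F (v * u) := by
    intro u
    rw [hV, Finset.sum_image hinj]
    exact Finset.sum_congr rfl fun x _ => by rw [one_mul, mul_comm]
  apply Complex.ofReal_injective
  calc (↑(∑ u : F, Complex.normSq (∑ x ∈ Finset.range n, psi F (u * (e * h ^ x)))) : ℂ)
      = ∑ u : F, ((∑ v ∈ V, (1:ℂ) * psi F (v * u)) *
          (starRingEnd ℂ) (∑ v ∈ V, (1:ℂ) * psi F (v * u))) := by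
        rw [Complex.ofReal_sum]
        refine Finset.sum_congr rfl fun u _ => ?_
        rw [← hrw u, Complex.mul_conj]
    _ = (Fintype.card F : ℂ) * ∑ v ∈ V, (1:ℂ) * (starRingEnd ℂ) (1:ℂ) := parseval V (fun _ => (1:ℂ))
    _ = ((Fintype.card F : ℝ) * n : ℝ) := by
        simp [hcard]

private lemma shift_bound (F : Type) [Field F] [Fintype F] [DecidableEq F]
    (e h : F) (he : e ≠ 0) (hh : h ≠ 0) (hfin : IsOfFinOrder h) (u : F) (hu : u ≠ 0) :
    Complex.normSq (∑ x ∈ Finset.range (orderOf h), psi F (u * (e * h ^ x)))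
      ≤ (Fintype.card F : ℝ) := by
  set s := orderOf h with hsdef
  have hs0 : 0 < s := hfin.orderOf_pos
  have hhs : h ^ s = 1 := pow_orderOf_eq_one h
  have hpmod : ∀ k : ℕ, h ^ (k % s) = h ^ k := by
    intro k
    conv_rhs => rw [← Nat.div_add_mod k s]
    rw [pow_add, pow_mul, hhs, one_pow, one_mul]
  set Sf : F → ℝ := fun v => Complex.normSq (∑ x ∈ Finset.range s, psi F (v * (e * h ^ x)))
    with hSf
  have shift : ∀ v : F, Sf (v * h) = Sf v := by
    intro v
    have hcalc : ∑ x ∈ Finset.range s, psi F (v * h * (e * h ^ x))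
        = ∑ x ∈ Finset.range s, psi F (v * (e * h ^ x)) := by
      calc ∑ x ∈ Finset.range s, psi F (v * h * (e * h ^ x))
          = ∑ x ∈ Finset.range s, psi F (v * (e * h ^ ((x + 1) % s))) := by
            refine Finset.sum_congr rfl fun x _ => ?_
            rw [hpmod]
            congr 1
            rw [pow_succ]
            ring
        _ = ∑ x ∈ Finset.range s, psi F (v * (e * h ^ x)) := by
            refine Finset.sum_nbij' (i := fun x => (x + 1) % s) (j := fun y => (y + (s - 1)) % s)
              ?_ ?_ ?_ ?_ ?_
            · intro x _; exact Finset.mem_range.mpr (Nat.mod_lt _ hs0)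
            · intro y _; exact Finset.mem_range.mpr (Nat.mod_lt _ hs0)
            · intro x hx; exact mod_left_inv hs0 (Finset.mem_range.mp hx)
            · intro y hy; exact mod_right_inv hs0 (Finset.mem_range.mp hy)
            · intro x _; rfl
    simp only [hSf]
    rw [hcalc]
  have shiftpow : ∀ (k : ℕ), Sf (u * h ^ k) = Sf u := by
    intro k
    induction k with
    | zero => simp
    | succ k ih => rw [pow_succ, ← mul_assoc, shift, ih]
  have hinj2 : ∀ x ∈ Finset.range s, ∀ y ∈ Finset.range s, u * h ^ x = u * h ^ y → x = y := by
    intro x hx y hy hxy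
    exact pow_inj_lt h hh (Finset.mem_range.mp hx) (Finset.mem_range.mp hy)
      (mul_left_cancel₀ hu hxy)
  have e1 : (s : ℝ) * Sf u = ∑ x ∈ Finset.range s, Sf (u * h ^ x) := by
    rw [Finset.sum_congr rfl fun x _ => shiftpow x, Finset.sum_const, Finset.card_range,
      nsmul_eq_mul]
  have e2 : ∑ x ∈ Finset.range s, Sf (u * h ^ x)
      = ∑ v ∈ (Finset.range s).image (fun x => u * h ^ x), Sf v :=
    (Finset.sum_image hinj2).symm
  have e3 : ∑ v ∈ (Finset.range s).image (fun x => u * h ^ x), Sf v ≤ ∑ v : F, Sf v := by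
    refine Finset.sum_le_sum_of_subset_of_nonneg (Finset.subset_univ _) ?_
    intro v _ _
    exact Complex.normSq_nonneg _
  have e4 : ∑ v : F, Sf v = (Fintype.card F : ℝ) * s :=
    sum_normSq F e h he hh s le_rfl
  have key : (s : ℝ) * Sf u ≤ (Fintype.card F : ℝ) * s := by
    rw [e1, e2]; rw [e4] at e3; exact e3
  have hs0' : (0 : ℝ) < s := by exact_mod_cast hs0
  nlinarith [key]


open Finset Complex in
/-- For a finite field `F_q`, nonzero `a, b ∈ F_q`, nonzero `f, g ∈ F_q` of
multiplicative orders `s, t`, a positive integer `r ≤ t`, and `N_c` the number of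
pairs `(x, y)`, `0 ≤ x ≤ s-1`, `0 ≤ y ≤ r-1`, with `a·f^x + b·g^y = c`:
for every real `δ > 0`, the number of `c ∈ F_q` with `|N_c − r·s/q| ≥ δ·√r`
is at most `q/δ²`. -/
theorem stmt_6 (F : Type) [Field F] [Fintype F] [DecidableEq F]
    (a b f g : F) (s t r : ℕ)
    (ha : a ≠ 0) (hb : b ≠ 0) (hf : f ≠ 0) (hg : g ≠ 0)
    (hs : orderOf f = s) (ht : orderOf g = t) (hr : 0 < r) (hrt : r ≤ t)
    (δ : ℝ) (hδ : 0 < δ) :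
    ((Finset.univ.filter (fun c : F =>
        δ * Real.sqrt r ≤
          |((((Finset.range s ×ˢ Finset.range r).filter
                (fun p => a * f ^ p.1 + b * g ^ p.2 = c)).card : ℝ) -
            (r : ℝ) * s / (Fintype.card F : ℝ))|)).card : ℝ) ≤
      (Fintype.card F : ℝ) / δ ^ 2 := by
  classical
  have hq0 : 0 < Fintype.card F := Fintype.card_pos
  have hq1 : 1 < Fintype.card F := Fintype.one_lt_card
  have hfin : ∀ h : F, h ≠ 0 → IsOfFinOrder h := fun h hh =>
    isOfFinOrder_iff_pow_eq_one.mpr ⟨Fintype.card F - 1, by omega,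
      FiniteField.pow_card_sub_one_eq_one h hh⟩
  have hs0 : 0 < s := hs ▸ (hfin f hf).orderOf_pos
  have ht0 : 0 < t := ht ▸ (hfin g hg).orderOf_pos
  set S : F → ℂ := fun u => ∑ x ∈ Finset.range s, psi F (u * (a * f ^ x)) with hS
  set T : F → ℂ := fun u => ∑ y ∈ Finset.range r, psi F (u * (b * g ^ y)) with hT
  set N : F → ℕ := fun c => ((Finset.range s ×ˢ Finset.range r).filter
      (fun p => a * f ^ p.1 + b * g ^ p.2 = c)).card with hN
  -- Step A : Fourier expansion of the counting function
  have stepA : ∀ c : F, ∑ u : F, (S u * T u) * psi F (u * (-c))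
      = (Fintype.card F : ℂ) * (N c : ℂ) := by
    intro c
    have h1 : ∀ u : F, (S u * T u) * psi F (u * (-c)) =
        ∑ p ∈ Finset.range s ×ˢ Finset.range r,
          psi F (u * (a * f ^ p.1 + b * g ^ p.2 - c)) := by
      intro u
      rw [Finset.sum_product]
      simp only [hS, hT]
      rw [Finset.sum_mul_sum, Finset.sum_mul]
      refine Finset.sum_congr rfl fun x _ => ?_
      rw [Finset.sum_mul]
      refine Finset.sum_congr rfl fun y _ => ?_
      rw [← AddChar.map_add_eq_mul, ← AddChar.map_add_eq_mul]
      congr 1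
      ring
    rw [Finset.sum_congr rfl fun u _ => h1 u, Finset.sum_comm]
    have h2 : ∀ p ∈ Finset.range s ×ˢ Finset.range r,
        ∑ u : F, psi F (u * (a * f ^ p.1 + b * g ^ p.2 - c))
          = (Fintype.card F : ℂ) * (if a * f ^ p.1 + b * g ^ p.2 = c then 1 else 0) := by
      intro p _
      rw [psi_sum]
      by_cases h : a * f ^ p.1 + b * g ^ p.2 = c
      · simp [sub_eq_zero.mpr h, h]
      · simp [sub_ne_zero.mpr h, h]
    rw [Finset.sum_congr rfl h2, ← Finset.mul_sum, Finset.sum_boole]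
  have S0 : S 0 = (s : ℂ) := by simp [hS]
  have T0 : T 0 = (r : ℂ) := by simp [hT]
  set D : Finset F := Finset.univ.erase 0 with hD
  -- Step A' : subtracting the main term
  have stepA' : ∀ c : F, ∑ u ∈ D, (S u * T u) * psi F (u * (-c))
      = (Fintype.card F : ℂ) * (N c : ℂ) - (s : ℂ) * r := by
    intro c
    have h0 := stepA c
    rw [← Finset.add_sum_erase _ _ (Finset.mem_univ (0 : F))] at h0
    rw [S0, T0, zero_mul, AddChar.map_zero_eq_one] at h0
    rw [← hD] at h0
    linear_combination h0
  -- Variance identity via Parseval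
  have E : ∑ c : F, ((Fintype.card F : ℝ) * (N c : ℝ) - (s : ℝ) * r)^2
      = (Fintype.card F : ℝ) * ∑ u ∈ D, Complex.normSq (S u) * Complex.normSq (T u) := by
    apply Complex.ofReal_injective
    calc ((∑ c : F, ((Fintype.card F : ℝ) * (N c : ℝ) - (s : ℝ) * r)^2 : ℝ) : ℂ)
        = ∑ c : F, ((∑ u ∈ D, (S u * T u) * psi F (u * (-c))) *
            (starRingEnd ℂ) (∑ v ∈ D, (S v * T v) * psi F (v * (-c)))) := by
          rw [Complex.ofReal_sum]
          refine Finset.sum_congr rfl fun c _ => ?_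
          rw [stepA' c]
          have hz : ((Fintype.card F : ℂ) * (N c : ℂ) - (s : ℂ) * r)
              = (((Fintype.card F : ℝ) * (N c : ℝ) - (s : ℝ) * r : ℝ) : ℂ) := by
            push_cast; ring
          rw [hz, Complex.conj_ofReal, ← Complex.ofReal_mul, ← sq]
      _ = ∑ c : F, ((∑ u ∈ D, (S u * T u) * psi F (u * c)) *
            (starRingEnd ℂ) (∑ v ∈ D, (S v * T v) * psi F (v * c))) :=
          Fintype.sum_equiv (Equiv.neg F) _ _ (fun c => by simp)
      _ = (Fintype.card F : ℂ) * ∑ u ∈ D, (S u * T u) * (starRingEnd ℂ) (S u * T u) :=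
          parseval D (fun u => S u * T u)
      _ = ((Fintype.card F : ℝ) * ∑ u ∈ D, Complex.normSq (S u) * Complex.normSq (T u) : ℝ) := by
          push_cast
          rw [Finset.mul_sum, Finset.mul_sum]
          refine Finset.sum_congr rfl fun u _ => ?_
          rw [(starRingEnd ℂ).map_mul, mul_mul_mul_comm, Complex.mul_conj, Complex.mul_conj]
  have Sbound : ∀ u : F, u ≠ 0 → Complex.normSq (S u) ≤ (Fintype.card F : ℝ) := by
    intro u hu
    have hb2 := shift_bound F a f ha hf (hfin f hf) u hu
    rw [hs] at hb2
    simp only [hS]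
    exact hb2
  have Tsum : ∑ u : F, Complex.normSq (T u) = (Fintype.card F : ℝ) * r := by
    have hb2 := sum_normSq F b g hb hg r (ht ▸ hrt)
    simp only [hT]
    exact hb2
  have hκ : (0:ℝ) < (Fintype.card F : ℝ) := by exact_mod_cast hq0
  have Wbound : ∑ u ∈ D, Complex.normSq (S u) * Complex.normSq (T u)
      ≤ (Fintype.card F : ℝ) * ((Fintype.card F : ℝ) * r) := by
    calc ∑ u ∈ D, Complex.normSq (S u) * Complex.normSq (T u)
        ≤ ∑ u ∈ D, (Fintype.card F : ℝ) * Complex.normSq (T u) := by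
          refine Finset.sum_le_sum fun u hu => ?_
          exact mul_le_mul_of_nonneg_right (Sbound u (Finset.ne_of_mem_erase hu))
            (Complex.normSq_nonneg _)
      _ = (Fintype.card F : ℝ) * ∑ u ∈ D, Complex.normSq (T u) := by rw [Finset.mul_sum]
      _ ≤ (Fintype.card F : ℝ) * ∑ u : F, Complex.normSq (T u) := by
          refine mul_le_mul_of_nonneg_left ?_ (le_of_lt hκ)
          exact Finset.sum_le_sum_of_subset_of_nonneg (Finset.subset_univ _)
            (fun v _ _ => Complex.normSq_nonneg _)
      _ = (Fintype.card F : ℝ) * ((Fintype.card F : ℝ) * r) := by rw [Tsum]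
  have Var : ∑ c : F, ((N c : ℝ) - (r : ℝ) * s / (Fintype.card F : ℝ))^2
      ≤ (Fintype.card F : ℝ) * r := by
    have h1 : ∀ c : F, ((N c : ℝ) - (r : ℝ) * s / (Fintype.card F : ℝ))^2
        = ((Fintype.card F : ℝ) * (N c : ℝ) - (s : ℝ) * r)^2 / (Fintype.card F : ℝ)^2 := by
      intro c; field_simp
    rw [Finset.sum_congr rfl fun c _ => h1 c, ← Finset.sum_div, E, div_le_iff₀ (by positivity)]
    calc (Fintype.card F:ℝ) * ∑ u ∈ D, Complex.normSq (S u) * Complex.normSq (T u)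
        ≤ (Fintype.card F:ℝ) * ((Fintype.card F:ℝ) * ((Fintype.card F:ℝ)*r)) :=
          mul_le_mul_of_nonneg_left Wbound (le_of_lt hκ)
      _ = (Fintype.card F:ℝ) * r * (Fintype.card F:ℝ)^2 := by ring
  -- Chebyshev
  set K := Finset.univ.filter (fun c : F =>
      δ * Real.sqrt r ≤
        |((((Finset.range s ×ˢ Finset.range r).filter
              (fun p => a * f ^ p.1 + b * g ^ p.2 = c)).card : ℝ) -
          (r : ℝ) * s / (Fintype.card F : ℝ))|) with hK
  have hr0 : (0:ℝ) < r := by exact_mod_cast hr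
  rw [le_div_iff₀ (by positivity : (0:ℝ) < δ ^ 2)]
  refine le_of_mul_le_mul_right ?_ hr0
  have cheb : ∀ c ∈ K, δ ^ 2 * r ≤ ((N c : ℝ) - (r : ℝ) * s / (Fintype.card F : ℝ))^2 := by
    intro c hc
    rw [hK] at hc
    have h2 : δ * Real.sqrt r ≤ |(N c : ℝ) - (r : ℝ) * s / (Fintype.card F : ℝ)| :=
      (Finset.mem_filter.mp hc).2
    calc δ ^ 2 * r = (δ * Real.sqrt r)^2 := by
          rw [mul_pow, Real.sq_sqrt (by positivity : (0:ℝ) ≤ (r:ℝ))]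
      _ ≤ |(N c : ℝ) - (r : ℝ) * s / (Fintype.card F : ℝ)|^2 :=
          pow_le_pow_left₀ (by positivity) h2 2
      _ = ((N c : ℝ) - (r : ℝ) * s / (Fintype.card F : ℝ))^2 := sq_abs _
  calc (K.card : ℝ) * δ^2 * r = K.card • (δ^2 * r) := by rw [nsmul_eq_mul]; ring
    _ ≤ ∑ c ∈ K, ((N c : ℝ) - (r : ℝ) * s / (Fintype.card F : ℝ))^2 :=
        Finset.card_nsmul_le_sum K _ _ cheb
    _ ≤ ∑ c : F, ((N c : ℝ) - (r : ℝ) * s / (Fintype.card F : ℝ))^2 :=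
        Finset.sum_le_sum_of_subset_of_nonneg (Finset.subset_univ K) (fun c _ _ => sq_nonneg _)
    _ ≤ (Fintype.card F : ℝ) * r := Var
end

section
/- Let F_q be a finite field with q elements, q ≥ 3, let a, b be nonzero elements of F_q, and let f and g be nonzero elements of F_q of multiplicative orders s and t, respectively. If r is an integer satisfying q^2 · s^{−2} · log q ≤ r ≤ t, then for all but at most q/log q elements c ∈ F_q*, there exist integers x and y with 0 ≤ x ≤ s−1 and 0 ≤ y ≤ r−1 such that a·f^x + b·g^y = c. -/
open scoped Classical
open Finset

namespace Stmt7Aux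
variable {F : Type} [Field F] [Fintype F] [DecidableEq F]

lemma sum_mul_eq_ite (ψ : AddChar F ℂ) (hψ : ψ ≠ 0) (d : F) :
    ∑ v : F, ψ (v * d) = if d = 0 then (Fintype.card F : ℂ) else 0 := by
  split_ifs with h
  · simp [h, AddChar.map_zero_eq_one, Finset.card_univ]
  · have hprim : ψ.IsPrimitive := AddChar.IsPrimitive.of_ne_one (AddChar.ne_one_iff.mpr (AddChar.ne_zero_iff.mp hψ))
    have h1 : ψ.mulShift d ≠ 0 := AddChar.ne_zero_iff.mpr (AddChar.ne_one_iff.mp (hprim h))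
    have := AddChar.sum_eq_zero_iff_ne_zero.mpr h1
    simpa [AddChar.mulShift_apply, mul_comm] using this

lemma orderOf_pos_of_ne_zero {f : F} (hf : f ≠ 0) : 0 < orderOf f := by
  have : orderOf f = orderOf (Units.mk0 f hf) := by rw [← orderOf_units]; rfl
  rw [this]; exact orderOf_pos _

lemma pow_injOn_of_ne_zero {f : F} (hf : f ≠ 0) :
    Set.InjOn (f ^ ·) (Set.Iio (orderOf f)) := by
  have ho : orderOf (Units.mk0 f hf) = orderOf f := by rw [← orderOf_units]; rfl
  intro x hx y hy hxy
  have hxy' : Units.mk0 f hf ^ x = Units.mk0 f hf ^ y := Units.ext (by simpa using hxy)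
  exact pow_injOn_Iio_orderOf (by simpa [ho] using hx) (by simpa [ho] using hy) hxy'

/-- The complete character sum over a coset of the cyclic group generated by `f`
is bounded by `√q`. -/
lemma norm_sq_sum_le (ψ : AddChar F ℂ) (hψ : ψ ≠ 0) (a f : F) (ha : a ≠ 0) (hf : f ≠ 0) :
    ‖∑ x ∈ Finset.range (orderOf f), ψ (a * f ^ x)‖ ^ 2 ≤ (Fintype.card F : ℝ) := by
  have hs0 : 0 < orderOf f := orderOf_pos_of_ne_zero hf
  have hinj : ∀ x ∈ Finset.range (orderOf f), ∀ y ∈ Finset.range (orderOf f),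
      f ^ x = f ^ y → x = y := fun x hx y hy hxy =>
    pow_injOn_of_ne_zero hf (by simpa using Finset.mem_range.1 hx)
      (by simpa using Finset.mem_range.1 hy) hxy
  obtain ⟨H, hHmem, hcard, hsumH⟩ :
      ∃ H : Finset F, (∀ z, z ∈ H ↔ ∃ x < orderOf f, f ^ x = z) ∧ H.card = orderOf f ∧
        ∀ (φ : F → ℂ), ∑ h ∈ H, φ h = ∑ x ∈ Finset.range (orderOf f), φ (f ^ x) := by
    refine ⟨(Finset.range (orderOf f)).image (f ^ ·), ?_, ?_, ?_⟩
    · intro z; simp [Finset.mem_image]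
    · rw [Finset.card_image_of_injOn (fun x hx y hy => hinj x hx y hy), Finset.card_range]
    · intro φ; exact Finset.sum_image (fun x hx y hy => hinj x hx y hy)
  have hne : ∀ h ∈ H, h ≠ 0 := by
    intro h hh
    obtain ⟨x, -, rfl⟩ := (hHmem h).1 hh
    exact pow_ne_zero _ hf
  have hclosed : ∀ h₀ ∈ H, ∀ h ∈ H, h₀ * h ∈ H := by
    intro h₀ hh₀ h hh
    obtain ⟨i, -, rfl⟩ := (hHmem h₀).1 hh₀
    obtain ⟨j, -, rfl⟩ := (hHmem h).1 hh
    exact (hHmem _).2 ⟨(i + j) % orderOf f, Nat.mod_lt _ hs0, by rw [pow_mod_orderOf, pow_add]⟩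
  set q := Fintype.card F with hqdef
  set S : F → ℂ := fun v => ∑ h ∈ H, ψ (v * h) with hS
  have hSa : ∑ x ∈ Finset.range (orderOf f), ψ (a * f ^ x) = S a := (hsumH (fun h => ψ (a * h))).symm
  -- invariance of S under multiplying the argument by an element of H
  have hinv : ∀ h₀ ∈ H, S (a * h₀) = S a := by
    intro h₀ hh₀
    have h₀ne : h₀ ≠ 0 := hne _ hh₀
    have hinjH : ∀ x ∈ H, ∀ y ∈ H, h₀ * x = h₀ * y → x = y :=
      fun x _ y _ hxy => mul_left_cancel₀ h₀ne hxy
    have himg : H.image (h₀ * ·) = H := by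
      apply Finset.eq_of_subset_of_card_le
      · intro z hz
        rw [Finset.mem_image] at hz
        obtain ⟨h, hh, rfl⟩ := hz
        exact hclosed _ hh₀ _ hh
      · rw [Finset.card_image_of_injOn (fun x hx y hy => hinjH x hx y hy)]
    calc S (a * h₀) = ∑ h ∈ H, ψ (a * (h₀ * h)) := by
          refine Finset.sum_congr rfl fun h _ => ?_
          rw [mul_assoc]
      _ = ∑ z ∈ H.image (h₀ * ·), ψ (a * z) :=
          (Finset.sum_image (f := fun z => ψ (a * z)) (fun x hx y hy => hinjH x hx y hy)).symm
      _ = S a := by rw [himg]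
  -- second moment identity
  have hmoment : ∑ v : F, ‖S v‖ ^ 2 = (q : ℝ) * H.card := by
    have hC : ∑ v : F, (S v * (starRingEnd ℂ) (S v)) = (q : ℂ) * H.card := by
      have expand : ∀ v : F, S v * (starRingEnd ℂ) (S v)
          = ∑ h ∈ H, ∑ h' ∈ H, ψ (v * (h - h')) := by
        intro v
        rw [hS]
        simp only
        rw [map_sum, Finset.sum_mul_sum]
        refine Finset.sum_congr rfl fun h _ => Finset.sum_congr rfl fun h' _ => ?_
        rw [← AddChar.inv_apply_eq_conj, ← AddChar.map_neg_eq_inv, ← AddChar.map_add_eq_mul]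
        ring_nf
      calc ∑ v : F, (S v * (starRingEnd ℂ) (S v))
          = ∑ v : F, ∑ h ∈ H, ∑ h' ∈ H, ψ (v * (h - h')) :=
            Finset.sum_congr rfl fun v _ => expand v
        _ = ∑ h ∈ H, ∑ h' ∈ H, ∑ v : F, ψ (v * (h - h')) := by
            rw [Finset.sum_comm]
            exact Finset.sum_congr rfl fun h _ => Finset.sum_comm
        _ = ∑ h ∈ H, ∑ h' ∈ H, if h - h' = 0 then (q : ℂ) else 0 :=
            Finset.sum_congr rfl fun h _ => Finset.sum_congr rfl fun h' _ =>
              sum_mul_eq_ite ψ hψ _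
        _ = ∑ h ∈ H, ∑ h' ∈ H, if h' = h then (q : ℂ) else 0 := by
            refine Finset.sum_congr rfl fun h _ => Finset.sum_congr rfl fun h' _ => ?_
            congr 1
            simp [sub_eq_zero, eq_comm]
        _ = ∑ h ∈ H, (q : ℂ) := by
            refine Finset.sum_congr rfl fun h hh => ?_
            rw [Finset.sum_ite_eq' H h (fun _ => (q : ℂ))]
            simp [hh]
        _ = (q : ℂ) * H.card := by
            rw [Finset.sum_const]; push_cast; ring
    have : ((∑ v : F, ‖S v‖ ^ 2 : ℝ) : ℂ) = (((q : ℝ) * H.card : ℝ) : ℂ) := by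
      push_cast
      rw [← hC]
      exact Finset.sum_congr rfl fun v _ => (RCLike.mul_conj (S v)).symm
    exact_mod_cast this
  -- averaging
  have havg : (H.card : ℝ) * ‖S a‖ ^ 2 ≤ ∑ v : F, ‖S v‖ ^ 2 := by
    have hinjA : ∀ x ∈ H, ∀ y ∈ H, a * x = a * y → x = y :=
      fun x _ y _ hxy => mul_left_cancel₀ ha hxy
    have h1 : (H.card : ℝ) * ‖S a‖ ^ 2 = ∑ h₀ ∈ H, ‖S (a * h₀)‖ ^ 2 := by
      rw [Finset.sum_congr rfl fun h₀ hh₀ => by rw [hinv h₀ hh₀]]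
      rw [Finset.sum_const, nsmul_eq_mul]
    have h2 : ∑ h₀ ∈ H, ‖S (a * h₀)‖ ^ 2 = ∑ v ∈ H.image (a * ·), ‖S v‖ ^ 2 :=
      (Finset.sum_image (f := fun v => ‖S v‖ ^ 2) (fun x hx y hy => hinjA x hx y hy)).symm
    rw [h1, h2]
    exact Finset.sum_le_sum_of_subset_of_nonneg (Finset.subset_univ _)
      (fun _ _ _ => by positivity)
  rw [hSa]
  have hfin := havg.trans hmoment.le
  have hsR : (0:ℝ) < H.card := by
    rw [hcard]; exact_mod_cast hs0
  nlinarith [norm_nonneg (S a)]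

end Stmt7Aux

namespace Stmt7Aux2
variable {F : Type} [Field F] [Fintype F] [DecidableEq F]

/-- Fourier inversion for the representation count. -/
lemma fourier_count (a b f g : F) (s r : ℕ) (c : F) :
    ∑ ψ : AddChar F ℂ, ((∑ x ∈ Finset.range s, ψ (a * f ^ x)) *
        (∑ y ∈ Finset.range r, ψ (b * g ^ y)) * ψ (-c))
      = (Fintype.card F : ℂ) *
        (((Finset.range s ×ˢ Finset.range r).filter
          (fun p => a * f ^ p.1 + b * g ^ p.2 = c)).card : ℂ) := by
  have h1 : ∀ ψ : AddChar F ℂ,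
      (∑ x ∈ Finset.range s, ψ (a * f ^ x)) * (∑ y ∈ Finset.range r, ψ (b * g ^ y)) * ψ (-c)
      = ∑ p ∈ Finset.range s ×ˢ Finset.range r, ψ (a * f ^ p.1 + b * g ^ p.2 + -c) := by
    intro ψ
    rw [Finset.sum_mul_sum, Finset.sum_mul, Finset.sum_product]
    refine Finset.sum_congr rfl fun x _ => ?_
    rw [Finset.sum_mul]
    refine Finset.sum_congr rfl fun y _ => ?_
    rw [← AddChar.map_add_eq_mul, ← AddChar.map_add_eq_mul]
  calc ∑ ψ : AddChar F ℂ, ((∑ x ∈ Finset.range s, ψ (a * f ^ x)) *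
        (∑ y ∈ Finset.range r, ψ (b * g ^ y)) * ψ (-c))
      = ∑ ψ : AddChar F ℂ, ∑ p ∈ Finset.range s ×ˢ Finset.range r,
          ψ (a * f ^ p.1 + b * g ^ p.2 + -c) := Finset.sum_congr rfl fun ψ _ => h1 ψ
    _ = ∑ p ∈ Finset.range s ×ˢ Finset.range r, ∑ ψ : AddChar F ℂ,
          ψ (a * f ^ p.1 + b * g ^ p.2 + -c) := Finset.sum_comm
    _ = ∑ p ∈ Finset.range s ×ˢ Finset.range r,
          if a * f ^ p.1 + b * g ^ p.2 + -c = 0 then (Fintype.card F : ℂ) else 0 :=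
        Finset.sum_congr rfl fun p _ => AddChar.sum_apply_eq_ite _
    _ = ∑ p ∈ Finset.range s ×ˢ Finset.range r,
          if a * f ^ p.1 + b * g ^ p.2 = c then (Fintype.card F : ℂ) else 0 := by
        refine Finset.sum_congr rfl fun p _ => ?_
        congr 1
        rw [← sub_eq_add_neg, sub_eq_zero]
    _ = (Fintype.card F : ℂ) *
        (((Finset.range s ×ˢ Finset.range r).filter
          (fun p => a * f ^ p.1 + b * g ^ p.2 = c)).card : ℂ) := by
        rw [Finset.sum_ite, Finset.sum_const, Finset.sum_const]
        simp [mul_comm]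

/-- Parseval identity for a character-sum expansion. -/
lemma parseval (w : AddChar F ℂ → ℂ) (T : Finset (AddChar F ℂ)) :
    ∑ c : F, ‖∑ ψ ∈ T, w ψ * ψ (-c)‖ ^ 2
      = (Fintype.card F : ℝ) * ∑ ψ ∈ T, ‖w ψ‖ ^ 2 := by
  set E : F → ℂ := fun c => ∑ ψ ∈ T, w ψ * ψ (-c) with hE
  have hC : ∑ c : F, (E c * (starRingEnd ℂ) (E c))
      = (Fintype.card F : ℂ) * ∑ ψ ∈ T, (w ψ * (starRingEnd ℂ) (w ψ)) := by
    have expand : ∀ c : F, E c * (starRingEnd ℂ) (E c)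
        = ∑ ψ₁ ∈ T, ∑ ψ₂ ∈ T, (w ψ₁ * (starRingEnd ℂ) (w ψ₂)) * ((ψ₂ - ψ₁) c) := by
      intro c
      rw [hE]
      simp only
      rw [map_sum, Finset.sum_mul_sum]
      refine Finset.sum_congr rfl fun ψ₁ _ => Finset.sum_congr rfl fun ψ₂ _ => ?_
      rw [map_mul, AddChar.sub_apply, ← AddChar.inv_apply_eq_conj, ← AddChar.map_neg_eq_inv]
      ring
    calc ∑ c : F, (E c * (starRingEnd ℂ) (E c))
        = ∑ c : F, ∑ ψ₁ ∈ T, ∑ ψ₂ ∈ T, (w ψ₁ * (starRingEnd ℂ) (w ψ₂)) * ((ψ₂ - ψ₁) c) :=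
          Finset.sum_congr rfl fun c _ => expand c
      _ = ∑ ψ₁ ∈ T, ∑ ψ₂ ∈ T, (w ψ₁ * (starRingEnd ℂ) (w ψ₂)) * ∑ c : F, ((ψ₂ - ψ₁) c) := by
          rw [Finset.sum_comm]
          refine Finset.sum_congr rfl fun ψ₁ _ => ?_
          rw [Finset.sum_comm]
          refine Finset.sum_congr rfl fun ψ₂ _ => ?_
          rw [Finset.mul_sum]
      _ = ∑ ψ₁ ∈ T, ∑ ψ₂ ∈ T, (w ψ₁ * (starRingEnd ℂ) (w ψ₂)) *
            (if ψ₁ = ψ₂ then (Fintype.card F : ℂ) else 0) := by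
          refine Finset.sum_congr rfl fun ψ₁ _ => Finset.sum_congr rfl fun ψ₂ _ => ?_
          rw [AddChar.sum_eq_ite]
          congr 1
          exact if_congr (by rw [sub_eq_zero]; exact eq_comm) rfl rfl
      _ = ∑ ψ₁ ∈ T, (w ψ₁ * (starRingEnd ℂ) (w ψ₁)) * (Fintype.card F : ℂ) := by
          refine Finset.sum_congr rfl fun ψ₁ hψ₁ => ?_
          rw [Finset.sum_congr rfl (fun ψ₂ _ => mul_ite (ψ₁ = ψ₂) _ (Fintype.card F : ℂ) 0)]
          simp only [mul_zero]
          rw [Finset.sum_ite_eq T ψ₁ (fun ψ₂ => w ψ₁ * (starRingEnd ℂ) (w ψ₂) * (Fintype.card F : ℂ))]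
          simp [hψ₁]
      _ = (Fintype.card F : ℂ) * ∑ ψ ∈ T, (w ψ * (starRingEnd ℂ) (w ψ)) := by
          rw [Finset.mul_sum]
          exact Finset.sum_congr rfl fun ψ _ => by ring
  have : ((∑ c : F, ‖E c‖ ^ 2 : ℝ) : ℂ) = (((Fintype.card F : ℝ) * ∑ ψ ∈ T, ‖w ψ‖ ^ 2 : ℝ) : ℂ) := by
    push_cast
    calc ∑ c : F, ((‖E c‖ : ℂ)) ^ 2
        = ∑ c : F, E c * (starRingEnd ℂ) (E c) :=
          Finset.sum_congr rfl fun c _ => (RCLike.mul_conj (E c)).symm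
      _ = (Fintype.card F : ℂ) * ∑ ψ ∈ T, (w ψ * (starRingEnd ℂ) (w ψ)) := hC
      _ = (Fintype.card F : ℂ) * ∑ ψ ∈ T, ((‖w ψ‖ : ℂ)) ^ 2 := by
          rw [Finset.sum_congr rfl fun ψ _ => RCLike.mul_conj (w ψ)]
          rfl
  exact_mod_cast this

/-- Total second moment of the incomplete sum `SB`. -/
lemma sb_total (b g : F) (r : ℕ) (hb : b ≠ 0)
    (hinj : ∀ y < r, ∀ y' < r, g ^ y = g ^ y' → y = y') :
    ∑ ψ : AddChar F ℂ, ‖∑ y ∈ Finset.range r, ψ (b * g ^ y)‖ ^ 2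
      = (Fintype.card F : ℝ) * r := by
  have hC : ∑ ψ : AddChar F ℂ, ((∑ y ∈ Finset.range r, ψ (b * g ^ y)) *
      (starRingEnd ℂ) (∑ y ∈ Finset.range r, ψ (b * g ^ y)))
      = (Fintype.card F : ℂ) * r := by
    have expand : ∀ ψ : AddChar F ℂ, (∑ y ∈ Finset.range r, ψ (b * g ^ y)) *
        (starRingEnd ℂ) (∑ y ∈ Finset.range r, ψ (b * g ^ y))
        = ∑ y ∈ Finset.range r, ∑ y' ∈ Finset.range r, ψ (b * g ^ y + -(b * g ^ y')) := by
      intro ψ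
      rw [map_sum, Finset.sum_mul_sum]
      refine Finset.sum_congr rfl fun y _ => Finset.sum_congr rfl fun y' _ => ?_
      rw [← AddChar.inv_apply_eq_conj, ← AddChar.map_neg_eq_inv, ← AddChar.map_add_eq_mul]
    calc ∑ ψ : AddChar F ℂ, ((∑ y ∈ Finset.range r, ψ (b * g ^ y)) *
        (starRingEnd ℂ) (∑ y ∈ Finset.range r, ψ (b * g ^ y)))
        = ∑ ψ : AddChar F ℂ, ∑ y ∈ Finset.range r, ∑ y' ∈ Finset.range r,
            ψ (b * g ^ y + -(b * g ^ y')) := Finset.sum_congr rfl fun ψ _ => expand ψ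
      _ = ∑ y ∈ Finset.range r, ∑ y' ∈ Finset.range r, ∑ ψ : AddChar F ℂ,
            ψ (b * g ^ y + -(b * g ^ y')) := by
          rw [Finset.sum_comm]
          exact Finset.sum_congr rfl fun y _ => Finset.sum_comm
      _ = ∑ y ∈ Finset.range r, ∑ y' ∈ Finset.range r,
            if b * g ^ y + -(b * g ^ y') = 0 then (Fintype.card F : ℂ) else 0 :=
          Finset.sum_congr rfl fun y _ => Finset.sum_congr rfl fun y' _ =>
            AddChar.sum_apply_eq_ite _
      _ = ∑ y ∈ Finset.range r, ∑ y' ∈ Finset.range r,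
            if y' = y then (Fintype.card F : ℂ) else 0 := by
          refine Finset.sum_congr rfl fun y hy => Finset.sum_congr rfl fun y' hy' => ?_
          congr 1
          rw [← sub_eq_add_neg, sub_eq_zero]
          simp only [eq_iff_iff]
          constructor
          · intro h
            exact hinj y' (Finset.mem_range.1 hy') y (Finset.mem_range.1 hy)
              (mul_left_cancel₀ hb h.symm)
          · rintro rfl; rfl
      _ = ∑ y ∈ Finset.range r, (Fintype.card F : ℂ) := by
          refine Finset.sum_congr rfl fun y hy => ?_
          rw [Finset.sum_ite_eq' (Finset.range r) y (fun _ => (Fintype.card F : ℂ))]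
          simp [hy]
      _ = (Fintype.card F : ℂ) * r := by
          rw [Finset.sum_const, Finset.card_range]; push_cast; ring
  have : ((∑ ψ : AddChar F ℂ, ‖∑ y ∈ Finset.range r, ψ (b * g ^ y)‖ ^ 2 : ℝ) : ℂ)
      = (((Fintype.card F : ℝ) * r : ℝ) : ℂ) := by
    push_cast
    rw [← hC]
    exact Finset.sum_congr rfl fun ψ _ => (RCLike.mul_conj _).symm
  exact_mod_cast this

end Stmt7Aux2

namespace Stmt7Aux3
variable {F : Type} [Field F] [Fintype F] [DecidableEq F]

theorem main (hq : 3 ≤ Fintype.card F)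
    (a b f g : F) (s t r : ℕ)
    (ha : a ≠ 0) (hb : b ≠ 0) (hf : f ≠ 0) (hg : g ≠ 0)
    (hs : orderOf f = s) (ht : orderOf g = t)
    (hr : (Fintype.card F : ℝ) ^ 2 * ((s : ℝ) ^ 2)⁻¹ * Real.log (Fintype.card F)
        ≤ (r : ℝ))
    (hrt : r ≤ t) :
    ((Finset.univ.filter (fun c : F => c ≠ 0 ∧
        ¬ ∃ x y : ℕ, x < s ∧ y < r ∧ a * f ^ x + b * g ^ y = c)).card : ℝ) ≤
      (Fintype.card F : ℝ) / Real.log (Fintype.card F) := by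
  have hq1 : (1:ℝ) < (Fintype.card F : ℝ) := by
    have : (3:ℝ) ≤ (Fintype.card F : ℝ) := by exact_mod_cast hq
    linarith
  have hqR : (0:ℝ) < (Fintype.card F : ℝ) := by linarith
  have hlog : 0 < Real.log (Fintype.card F) := Real.log_pos hq1
  have hs0 : 0 < s := hs ▸ Stmt7Aux.orderOf_pos_of_ne_zero hf
  have hsR : (0:ℝ) < (s : ℝ) := by exact_mod_cast hs0
  have hr0R : (0:ℝ) < (r : ℝ) := by
    refine lt_of_lt_of_le ?_ hr
    have := mul_pos (mul_pos (pow_pos hqR 2) (inv_pos.2 (pow_pos hsR 2))) hlog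
    exact this
  have hginj : ∀ y < r, ∀ y' < r, g ^ y = g ^ y' → y = y' := by
    intro y hy y' hy' hyy
    exact Stmt7Aux.pow_injOn_of_ne_zero hg
      (show y ∈ Set.Iio (orderOf g) from by rw [ht]; exact lt_of_lt_of_le hy hrt)
      (show y' ∈ Set.Iio (orderOf g) from by rw [ht]; exact lt_of_lt_of_le hy' hrt) hyy
  set Z : Finset F := Finset.univ.filter (fun c : F => c ≠ 0 ∧
      ¬ ∃ x y : ℕ, x < s ∧ y < r ∧ a * f ^ x + b * g ^ y = c) with hZ
  set T : Finset (AddChar F ℂ) := Finset.univ.erase 0 with hT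
  -- For exceptional c the nontrivial-character sum is exactly -(s*r)
  have hEc : ∀ c ∈ Z, ∑ ψ ∈ T, ((∑ x ∈ Finset.range s, ψ (a * f ^ x)) *
      (∑ y ∈ Finset.range r, ψ (b * g ^ y)) * ψ (-c)) = -((s : ℂ) * r) := by
    intro c hc
    have hN : ((Finset.range s ×ˢ Finset.range r).filter
        (fun p => a * f ^ p.1 + b * g ^ p.2 = c)).card = 0 := by
      rw [Finset.card_eq_zero, Finset.filter_eq_empty_iff]
      rintro ⟨x, y⟩ hp heq
      rw [Finset.mem_product, Finset.mem_range, Finset.mem_range] at hp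
      rw [hZ, Finset.mem_filter] at hc
      exact hc.2.2 ⟨x, y, hp.1, hp.2, heq⟩
    have htot := Stmt7Aux2.fourier_count a b f g s r c
    rw [hN] at htot
    simp only [Nat.cast_zero, mul_zero] at htot
    have hsplit : ∑ ψ : AddChar F ℂ, ((∑ x ∈ Finset.range s, ψ (a * f ^ x)) *
        (∑ y ∈ Finset.range r, ψ (b * g ^ y)) * ψ (-c))
        = ((∑ x ∈ Finset.range s, (0 : AddChar F ℂ) (a * f ^ x)) *
          (∑ y ∈ Finset.range r, (0 : AddChar F ℂ) (b * g ^ y)) * (0 : AddChar F ℂ) (-c))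
          + ∑ ψ ∈ T, ((∑ x ∈ Finset.range s, ψ (a * f ^ x)) *
            (∑ y ∈ Finset.range r, ψ (b * g ^ y)) * ψ (-c)) := by
      rw [hT]
      exact (Finset.add_sum_erase _ _ (Finset.mem_univ 0)).symm
    rw [htot] at hsplit
    have h0 : ((∑ x ∈ Finset.range s, (0 : AddChar F ℂ) (a * f ^ x)) *
        (∑ y ∈ Finset.range r, (0 : AddChar F ℂ) (b * g ^ y)) * (0 : AddChar F ℂ) (-c))
        = (s : ℂ) * r := by
      simp [AddChar.zero_apply]
    rw [h0] at hsplit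
    linear_combination -hsplit
  -- Second moment chain
  have key : ((Z.card : ℝ)) * ((s : ℝ) * r) ^ 2 ≤ (Fintype.card F : ℝ) ^ 3 * r := by
    have h1 : ∀ c ∈ Z, ‖∑ ψ ∈ T, ((∑ x ∈ Finset.range s, ψ (a * f ^ x)) *
        (∑ y ∈ Finset.range r, ψ (b * g ^ y)) * ψ (-c))‖ ^ 2 = ((s : ℝ) * r) ^ 2 := by
      intro c hc
      rw [hEc c hc, norm_neg, norm_mul]
      simp [Complex.norm_natCast]
    calc ((Z.card : ℝ)) * ((s : ℝ) * r) ^ 2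
        = ∑ c ∈ Z, ‖∑ ψ ∈ T, ((∑ x ∈ Finset.range s, ψ (a * f ^ x)) *
            (∑ y ∈ Finset.range r, ψ (b * g ^ y)) * ψ (-c))‖ ^ 2 := by
          rw [Finset.sum_congr rfl h1, Finset.sum_const, nsmul_eq_mul]
      _ ≤ ∑ c : F, ‖∑ ψ ∈ T, ((∑ x ∈ Finset.range s, ψ (a * f ^ x)) *
            (∑ y ∈ Finset.range r, ψ (b * g ^ y)) * ψ (-c))‖ ^ 2 :=
          Finset.sum_le_sum_of_subset_of_nonneg (Finset.subset_univ _)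
            (fun _ _ _ => by positivity)
      _ = (Fintype.card F : ℝ) * ∑ ψ ∈ T, ‖(∑ x ∈ Finset.range s, ψ (a * f ^ x)) *
            (∑ y ∈ Finset.range r, ψ (b * g ^ y))‖ ^ 2 := by
          simpa using Stmt7Aux2.parseval (F := F)
            (fun ψ => (∑ x ∈ Finset.range s, ψ (a * f ^ x)) *
              (∑ y ∈ Finset.range r, ψ (b * g ^ y))) T
      _ ≤ (Fintype.card F : ℝ) * ∑ ψ ∈ T, (Fintype.card F : ℝ) *
            ‖∑ y ∈ Finset.range r, ψ (b * g ^ y)‖ ^ 2 := by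
          refine mul_le_mul_of_nonneg_left (Finset.sum_le_sum fun ψ hψT => ?_) hqR.le
          have hψ0 : ψ ≠ 0 := by
            rw [hT] at hψT
            exact (Finset.mem_erase.1 hψT).1
          rw [norm_mul, mul_pow]
          have hA := Stmt7Aux.norm_sq_sum_le ψ hψ0 a f ha hf
          rw [hs] at hA
          exact mul_le_mul_of_nonneg_right hA (by positivity)
      _ = (Fintype.card F : ℝ) * (Fintype.card F : ℝ) *
            ∑ ψ ∈ T, ‖∑ y ∈ Finset.range r, ψ (b * g ^ y)‖ ^ 2 := by
          rw [← Finset.mul_sum, mul_assoc]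
      _ ≤ (Fintype.card F : ℝ) * (Fintype.card F : ℝ) *
            ∑ ψ : AddChar F ℂ, ‖∑ y ∈ Finset.range r, ψ (b * g ^ y)‖ ^ 2 := by
          refine mul_le_mul_of_nonneg_left ?_ (by positivity)
          exact Finset.sum_le_sum_of_subset_of_nonneg (hT ▸ Finset.erase_subset _ _)
            (fun _ _ _ => by positivity)
      _ = (Fintype.card F : ℝ) * (Fintype.card F : ℝ) * ((Fintype.card F : ℝ) * r) := by
          rw [Stmt7Aux2.sb_total b g r hb hginj]
      _ = (Fintype.card F : ℝ) ^ 3 * r := by ring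
  -- Final arithmetic
  have e1 : (Fintype.card F : ℝ) ^ 2 * Real.log (Fintype.card F) ≤ (r : ℝ) * (s : ℝ) ^ 2 := by
    have h' := mul_le_mul_of_nonneg_right hr (sq_nonneg (s : ℝ))
    calc (Fintype.card F : ℝ) ^ 2 * Real.log (Fintype.card F)
        = (Fintype.card F : ℝ) ^ 2 * ((s : ℝ) ^ 2)⁻¹ * Real.log (Fintype.card F) * (s : ℝ) ^ 2 := by
          field_simp
      _ ≤ (r : ℝ) * (s : ℝ) ^ 2 := h'
  rw [le_div_iff₀ hlog]
  have hZc : (0:ℝ) ≤ (Z.card : ℝ) := Nat.cast_nonneg _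
  have step1 : (Z.card : ℝ) * (r : ℝ) * ((Fintype.card F : ℝ) ^ 2 * Real.log (Fintype.card F))
      ≤ (Fintype.card F : ℝ) ^ 3 * r := by
    calc (Z.card : ℝ) * (r : ℝ) * ((Fintype.card F : ℝ) ^ 2 * Real.log (Fintype.card F))
        ≤ (Z.card : ℝ) * (r : ℝ) * ((r : ℝ) * (s : ℝ) ^ 2) :=
          mul_le_mul_of_nonneg_left e1 (by positivity)
      _ = (Z.card : ℝ) * ((s : ℝ) * r) ^ 2 := by ring
      _ ≤ (Fintype.card F : ℝ) ^ 3 * r := key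
  nlinarith [mul_pos (pow_pos hqR 2) hr0R, step1, hZc, hlog, hr0R]

end Stmt7Aux3

/-- For a finite field `F_q` with `q ≥ 3`, nonzero `a, b ∈ F_q`, nonzero
`f, g ∈ F_q` of multiplicative orders `s, t`, and an integer `r` with
`q²·s⁻²·log q ≤ r ≤ t`: for all but at most `q/log q` elements `c ∈ F_q*`,
there exist integers `x, y` with `0 ≤ x ≤ s-1`, `0 ≤ y ≤ r-1` and
`a·f^x + b·g^y = c`. -/
theorem stmt_7 (F : Type) [Field F] [Fintype F] [DecidableEq F]
    (hq : 3 ≤ Fintype.card F)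
    (a b f g : F) (s t r : ℕ)
    (ha : a ≠ 0) (hb : b ≠ 0) (hf : f ≠ 0) (hg : g ≠ 0)
    (hs : orderOf f = s) (ht : orderOf g = t)
    (hr : (Fintype.card F : ℝ) ^ 2 * ((s : ℝ) ^ 2)⁻¹ * Real.log (Fintype.card F)
        ≤ (r : ℝ))
    (hrt : r ≤ t) :
    ((Finset.univ.filter (fun c : F => c ≠ 0 ∧
        ¬ ∃ x y : ℕ, x < s ∧ y < r ∧ a * f ^ x + b * g ^ y = c)).card : ℝ) ≤
      (Fintype.card F : ℝ) / Real.log (Fintype.card F) := by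
  exact Stmt7Aux3.main hq a b f g s t r ha hb hf hg hs ht hr hrt
end
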